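/- The function u(v,w,z) = 2 log(2(z + R(v))/(1 + vw)) satisfies the Lorentzian SU(∞) Toda equation 4 u_{vw} + (e^u)_{zz} = 0 on the open set where z + R(v) > 0 and 1 + vw > 0. -/

import Mathlib

private lemma inner_w (c v w : ℝ) (hc : 0 < c) (h : 0 < 1 + v * w) :
    deriv (fun w' => 2 * Real.log (c / (1 + v * w'))) w = -2 * v / (1 + v * w) := by
  have hne : (1 + v * w) ≠ 0 := ne_of_gt h
  have h1 : HasDerivAt (fun w' => 1 + v * w') v w := by
    simpa using ((hasDerivAt_id w).const_mul v).const_add 1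
  have h2 : HasDerivAt (fun w' => c / (1 + v * w'))
      ((0 * (1 + v * w) - c * v) / (1 + v * w) ^ 2) w :=
    (hasDerivAt_const w c).div h1 hne
  have hx : c / (1 + v * w) ≠ 0 := (div_pos hc h).ne'
  have h3 := ((Real.hasDerivAt_log hx).comp w h2).const_mul 2
  simp only [Function.comp] at h3
  rw [h3.deriv]
  field_simp
  ring

private lemma inner_z (a b z' : ℝ) (hb : 0 < b) (hz' : 0 < z' + a) :
    deriv (fun z'' => Real.exp (2 * Real.log (2 * (z'' + a) / b))) z'
      = 8 * (z' + a) / b ^ 2 := by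
  have hev : (fun z'' => Real.exp (2 * Real.log (2 * (z'' + a) / b)))
      =ᶠ[nhds z'] fun z'' => (2 * (z'' + a) / b) ^ 2 := by
    have e1 : ∀ᶠ z'' in nhds z', 0 < z'' + a :=
      ((continuous_id.add continuous_const).continuousAt).eventually (eventually_gt_nhds hz')
    filter_upwards [e1] with z'' h1
    have hx : 0 < 2 * (z'' + a) / b := by positivity
    rw [show (2 : ℝ) * Real.log (2 * (z'' + a) / b) = Real.log ((2 * (z'' + a) / b) ^ 2) by
      rw [Real.log_pow]; push_cast; ring, Real.exp_log (by positivity)]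
  rw [hev.deriv_eq]
  have h1 : HasDerivAt (fun z'' => 2 * (z'' + a) / b) (2 / b) z' := by
    simpa using (((hasDerivAt_id z').add_const a).const_mul 2).div_const b
  have h2 : HasDerivAt (fun z'' => (2 * (z'' + a) / b) ^ 2) _ z' := h1.pow 2
  rw [h2.deriv]
  norm_num
  field_simp
  ring

/-- The function `u(v,w,z) = 2 log(2(z + R(v))/(1 + vw))` solves the Lorentzian
`SU(∞)` Toda equation `4 u_{vw} + (eᵘ)_{zz} = 0` on the region where
`z + R(v) > 0` and `1 + vw > 0`. -/
theorem toda_solution (R : ℝ → ℝ) (hR : ContDiff ℝ 2 R)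
    (u : ℝ → ℝ → ℝ → ℝ)
    (hu : ∀ v w z, u v w z = 2 * Real.log (2 * (z + R v) / (1 + v * w))) :
    ∀ v w z, 0 < z + R v → 0 < 1 + v * w →
      4 * deriv (fun v' => deriv (fun w' => u v' w' z) w) v
        + deriv (fun z' => deriv (fun z'' => Real.exp (u v w z'')) z') z = 0 := by
  intro v w z hz hvw
  have hvwne : (1 + v * w) ≠ 0 := ne_of_gt hvw
  have hA : deriv (fun v' => deriv (fun w' => u v' w' z) w) v = -2 / (1 + v * w) ^ 2 := by
    have hev : (fun v' => deriv (fun w' => u v' w' z) w)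
        =ᶠ[nhds v] fun v' => -2 * v' / (1 + v' * w) := by
      have e1 : ∀ᶠ v' in nhds v, 0 < z + R v' :=
        ((continuous_const.add hR.continuous).continuousAt).eventually (eventually_gt_nhds hz)
      have e2 : ∀ᶠ v' in nhds v, 0 < 1 + v' * w :=
        ((continuous_const.add (continuous_id.mul continuous_const)).continuousAt).eventually
          (eventually_gt_nhds hvw)
      filter_upwards [e1, e2] with v' h1 h2
      have := inner_w (2 * (z + R v')) v' w (by linarith) h2
      simp only [hu]
      convert this using 3 with w'
    rw [hev.deriv_eq]
    have h1 : HasDerivAt (fun v' => 1 + v' * w) w v := by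
      simpa using ((hasDerivAt_id v).mul_const w).const_add 1
    have h2 : HasDerivAt (fun v' => -2 * v') (-2) v := by
      simpa using (hasDerivAt_id v).const_mul (-2)
    have h3 : HasDerivAt (fun v' => -2 * v' / (1 + v' * w)) _ v := h2.div h1 (ne_of_gt hvw)
    rw [h3.deriv]
    field_simp
    ring
  have hB : deriv (fun z' => deriv (fun z'' => Real.exp (u v w z'')) z') z
      = 8 / (1 + v * w) ^ 2 := by
    have hev : (fun z' => deriv (fun z'' => Real.exp (u v w z'')) z')
        =ᶠ[nhds z] fun z' => 8 * (z' + R v) / (1 + v * w) ^ 2 := by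
      have e1 : ∀ᶠ z' in nhds z, 0 < z' + R v :=
        ((continuous_id.add continuous_const).continuousAt).eventually (eventually_gt_nhds hz)
      filter_upwards [e1] with z' h1
      have := inner_z (R v) (1 + v * w) z' hvw h1
      simp only [hu]
      exact this
    rw [hev.deriv_eq]
    have h1 : HasDerivAt (fun z' => 8 * (z' + R v) / (1 + v * w) ^ 2)
        (8 / (1 + v * w) ^ 2) z := by
      simpa using (((hasDerivAt_id z).add_const (R v)).const_mul 8).div_const ((1 + v * w) ^ 2)
    rw [h1.deriv]
  rw [hA, hB]
  field_simp
  ring
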